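/- For any x > 0, x Σ_{j=1}^{∞} (ψ'(1+jx) - 1/(jx)) - (1/2) log x = (1/x) Σ_{j=1}^{∞} (ψ'(1+j/x) - x/j) - (1/2) log(1/x), where ψ' is the trigamma function. -/

import Mathlib

open Real

/-- The `j`-th derivative of digamma (for `j ≥ 1`):
`ψ^{(j)}(z) = (-1)^{j+1} j! ∑_{ℓ≥0} 1/(ℓ+z)^{j+1}`. -/
noncomputable def psiDeriv (j : ℕ) (z : ℝ) : ℝ :=
  (-1) ^ (j + 1) * (j.factorial : ℝ) * ∑' ℓ : ℕ, 1 / (((ℓ : ℝ) + z) ^ (j + 1))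

open Filter Finset Topology

section GuinandAux

/-! ### Elementary logarithm bounds -/

lemma glog_le {a u : ℝ} (ha : 0 < a) (hu : 0 ≤ u) :
    Real.log (a + u) - Real.log a ≤ u / a := by
  have hau : 0 < a + u := by linarith
  have h1 : Real.log (a + u) - Real.log a = Real.log ((a + u) / a) :=
    (Real.log_div hau.ne' ha.ne').symm
  have h2 := Real.log_le_sub_one_of_pos (div_pos hau ha)
  have h3 : (a + u) / a - 1 = u / a := by field_simp; ring
  linarith

lemma glog_ge {a u : ℝ} (ha : 0 < a) (hu : 0 ≤ u) :
    u / (a + u) ≤ Real.log (a + u) - Real.log a := by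
  have hau : 0 < a + u := by linarith
  have h1 : Real.log a - Real.log (a + u) = Real.log (a / (a + u)) :=
    (Real.log_div ha.ne' hau.ne').symm
  have h2 := Real.log_le_sub_one_of_pos (div_pos ha hau)
  have h3 : a / (a + u) - 1 = -(u / (a + u)) := by field_simp; ring
  linarith

/-! ### The telescoping series for `1/y` and the trigamma formula -/

lemma gtendsto_inv_add (y : ℝ) :
    Tendsto (fun n : ℕ => 1 / ((n : ℝ) + y)) atTop (𝓝 0) := by
  have h1 : Tendsto (fun n : ℕ => ((n : ℝ) + y)) atTop atTop :=
    tendsto_atTop_add_const_right atTop y tendsto_natCast_atTop_atTop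
  have h2 := tendsto_inv_atTop_zero.comp h1
  simpa [Function.comp_def, one_div] using h2

lemma ghasSum_telescope {y : ℝ} (hy : 0 < y) :
    HasSum (fun ℓ : ℕ => 1 / ((ℓ : ℝ) + y) - 1 / ((ℓ : ℝ) + 1 + y)) (1 / y) := by
  have hnn : ∀ ℓ : ℕ, 0 ≤ 1 / ((ℓ : ℝ) + y) - 1 / ((ℓ : ℝ) + 1 + y) := by
    intro ℓ
    have h1 : (0:ℝ) < (ℓ : ℝ) + y := by positivity
    have h2 : ((ℓ : ℝ) + y) ≤ (ℓ : ℝ) + 1 + y := by linarith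
    have := one_div_le_one_div_of_le h1 h2
    linarith
  rw [hasSum_iff_tendsto_nat_of_nonneg hnn]
  have hps : ∀ n : ℕ, ∑ i ∈ range n, (1 / ((i : ℝ) + y) - 1 / ((i : ℝ) + 1 + y))
      = 1 / ((0:ℝ) + y) - 1 / ((n : ℝ) + y) := by
    intro n
    have := Finset.sum_range_sub' (fun i : ℕ => 1 / ((i : ℝ) + y)) n
    simp only [Nat.cast_zero, Nat.cast_add, Nat.cast_one] at this ⊢
    rw [← this]
  simp only [hps]
  have h := (tendsto_const_nhds (x := 1 / ((0:ℝ) + y)) (f := atTop (α := ℕ))).sub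
    (gtendsto_inv_add y)
  simpa using h

lemma gsummable_inv_sq {y : ℝ} (hy : 0 ≤ y) :
    Summable (fun ℓ : ℕ => 1 / (((ℓ : ℝ) + 1 + y) ^ 2)) := by
  have base : Summable (fun n : ℕ => 1 / ((n : ℝ) + 1) ^ 2) := by
    have h := summable_one_div_nat_pow.mpr (show 1 < 2 by norm_num)
    have h2 := (summable_nat_add_iff (f := fun n : ℕ => 1 / (n : ℝ) ^ 2) 1).mpr h
    simpa using h2
  apply base.of_nonneg_of_le (fun ℓ => by positivity)
  intro ℓ
  apply div_le_div_of_nonneg_left zero_le_one (by positivity)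
  have : (ℓ : ℝ) + 1 ≤ (ℓ : ℝ) + 1 + y := by linarith
  nlinarith [Nat.cast_nonneg (α := ℝ) ℓ]

lemma gpsi_eq {y : ℝ} (hy : 0 < y) :
    psiDeriv 1 (1 + y) - 1 / y
      = -∑' ℓ : ℕ, 1 / ((((ℓ : ℝ) + 1 + y)) ^ 2 * ((ℓ : ℝ) + y)) := by
  have h1 : psiDeriv 1 (1 + y) = ∑' ℓ : ℕ, 1 / (((ℓ : ℝ) + 1 + y) ^ 2) := by
    simp only [psiDeriv, Nat.factorial_one, Nat.cast_one]
    norm_num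
    exact tsum_congr fun ℓ => by ring_nf
  have htel := ghasSum_telescope hy
  have hsq := gsummable_inv_sq hy.le
  rw [h1, ← htel.tsum_eq, ← Summable.tsum_sub hsq htel.summable, ← tsum_neg]
  refine tsum_congr fun ℓ => ?_
  have hb : (0:ℝ) < (ℓ : ℝ) + y := by positivity
  have ha : (0:ℝ) < (ℓ : ℝ) + 1 + y := by linarith
  field_simp
  ring

/-! ### Summability over `ℕ × ℕ` by comparison with `(jℓ)^{-3/2}` -/

set_option maxHeartbeats 1000000 in
lemma gsummable_master :
    Summable (fun p : ℕ × ℕ =>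
      (1 / ((p.1 : ℝ) + 1) ^ ((3:ℝ)/2)) * (1 / ((p.2 : ℝ) + 1) ^ ((3:ℝ)/2))) := by
  have base : Summable (fun n : ℕ => 1 / ((n : ℝ) + 1) ^ ((3:ℝ)/2)) := by
    have h := Real.summable_one_div_nat_rpow.mpr (show (1:ℝ) < 3/2 by norm_num)
    have h2 := (summable_nat_add_iff (f := fun n : ℕ => 1 / (n : ℝ) ^ ((3:ℝ)/2)) 1).mpr h
    simpa using h2
  have h1 : (0 : ℕ → ℝ) ≤ (fun n : ℕ => 1 / ((n : ℝ) + 1) ^ ((3:ℝ)/2)) := by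
    intro n
    simp only [Pi.zero_apply]
    positivity
  exact base.mul_of_nonneg base h1 h1

lemma gcube_ineq {a b : ℝ} (ha : 0 < a) (hb : 0 < b) :
    (a * b) ^ ((3:ℝ)/2) ≤ a * b * (a + b) := by
  have hab : (0:ℝ) < a * b := by positivity
  have h1 : (a * b) ^ ((3:ℝ)/2) = (a * b) * (a * b) ^ ((1:ℝ)/2) := by
    rw [← Real.rpow_one_add' hab.le (by norm_num)]
    norm_num
  rw [h1, ← Real.sqrt_eq_rpow]
  have h2 : Real.sqrt (a * b) ≤ a + b := by
    have h3 : Real.sqrt (a * b) ≤ Real.sqrt ((a + b) ^ 2) := by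
      apply Real.sqrt_le_sqrt; nlinarith
    rwa [Real.sqrt_sq (by positivity)] at h3
  nlinarith [Real.sqrt_nonneg (a * b)]

lemma gsummable_of_le_cube {x C : ℝ} (hx : 0 < x) {F : ℕ × ℕ → ℝ}
    (h0 : ∀ p, 0 ≤ F p)
    (hle : ∀ j ℓ : ℕ, F (j, ℓ) ≤
      C / ((((j : ℝ) + 1) * x) * ((ℓ : ℝ) + 1) * ((((j : ℝ) + 1) * x) + ((ℓ : ℝ) + 1)))) :
    Summable F := by
  have hC : 0 ≤ C := by
    by_contra hneg
    push_neg at hneg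
    have hpos : (0:ℝ) < (((0:ℕ) : ℝ) + 1) * x * (((0:ℕ) : ℝ) + 1)
        * ((((0:ℕ) : ℝ) + 1) * x + (((0:ℕ) : ℝ) + 1)) := by positivity
    have := lt_of_le_of_lt (le_trans (h0 (0,0)) (hle 0 0)) (div_neg_of_neg_of_pos hneg hpos)
    exact lt_irrefl _ this
  refine Summable.of_nonneg_of_le h0 ?_
    (Summable.mul_left (C * x ^ (-((3:ℝ)/2))) gsummable_master)
  rintro ⟨j, ℓ⟩
  set a : ℝ := ((j : ℝ) + 1) * x with ha_def
  set b : ℝ := (ℓ : ℝ) + 1 with hb_def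
  have ha : 0 < a := by positivity
  have hb : 0 < b := by positivity
  have step1 : F (j, ℓ) ≤ C / (a * b * (a + b)) := hle j ℓ
  have step2 : C / (a * b * (a + b)) ≤ C / ((a * b) ^ ((3:ℝ)/2)) :=
    div_le_div_of_nonneg_left hC (by positivity) (gcube_ineq ha hb)
  have step3 : C / ((a * b) ^ ((3:ℝ)/2))
      = (C * x ^ (-((3:ℝ)/2)))
        * ((1 / ((j : ℝ) + 1) ^ ((3:ℝ)/2)) * (1 / ((ℓ : ℝ) + 1) ^ ((3:ℝ)/2))) := by
    have e1 : (a * b) ^ ((3:ℝ)/2)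
        = ((j : ℝ) + 1) ^ ((3:ℝ)/2) * x ^ ((3:ℝ)/2) * ((ℓ : ℝ) + 1) ^ ((3:ℝ)/2) := by
      rw [ha_def, hb_def, Real.mul_rpow (by positivity) (by positivity),
        Real.mul_rpow (by positivity) hx.le]
    rw [e1, Real.rpow_neg hx.le]
    have p1 : (0:ℝ) < ((j : ℝ) + 1) ^ ((3:ℝ)/2) := by positivity
    have p2 : (0:ℝ) < ((ℓ : ℝ) + 1) ^ ((3:ℝ)/2) := by positivity
    have p3 : (0:ℝ) < x ^ ((3:ℝ)/2) := by positivity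
    field_simp
  exact step1.trans (step2.trans_eq step3)

/-! ### Square partial sums -/

lemma gtendsto_sq_sum {f : ℕ × ℕ → ℝ} (hf : Summable f) :
    Tendsto (fun N => ∑ p ∈ range N ×ˢ range N, f p) atTop (𝓝 (∑' p, f p)) := by
  have hmono : Monotone (fun N => (range N ×ˢ range N : Finset (ℕ × ℕ))) := by
    intro a b hab
    exact Finset.product_subset_product (range_subset_range.mpr hab) (range_subset_range.mpr hab)
  have hcov : ∀ p : ℕ × ℕ, ∃ N, p ∈ (range N ×ˢ range N : Finset (ℕ × ℕ)) := by
    intro p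
    refine ⟨max p.1 p.2 + 1, ?_⟩
    simp only [mem_product, mem_range]
    omega
  exact hf.hasSum.comp (tendsto_atTop_finset_of_monotone hmono hcov)

lemma gsq_sum (x : ℝ) (hx : 0 < x) (N : ℕ) :
    ∑ p ∈ range N ×ˢ range N,
        ((x - 1) / (((p.1 : ℝ) + 1) * x + (p.2 : ℝ) + 1)
          - x / (((p.1 : ℝ) + 1) * x + (p.2 : ℝ))
          + 1 / ((p.1 : ℝ) * x + (p.2 : ℝ) + 1))
      = ∑ j ∈ range N, x / (((j : ℝ) + 1) * x + (N : ℝ))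
        - ∑ ℓ ∈ range N, 1 / ((N : ℝ) * x + (ℓ : ℝ) + 1) := by
  rw [Finset.sum_product]
  have hrow : ∀ j ∈ range N, ∑ ℓ ∈ range N,
      ((x - 1) / (((j : ℝ) + 1) * x + (ℓ : ℝ) + 1)
        - x / (((j : ℝ) + 1) * x + (ℓ : ℝ))
        + 1 / ((j : ℝ) * x + (ℓ : ℝ) + 1))
      = ∑ ℓ ∈ range N,
          ((1 / ((j : ℝ) * x + (ℓ : ℝ) + 1) - 1 / (((j : ℝ) + 1) * x + (ℓ : ℝ) + 1))
            - (x / (((j : ℝ) + 1) * x + (ℓ : ℝ)) - x / (((j : ℝ) + 1) * x + (ℓ : ℝ) + 1))) := by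
    intro j _
    refine Finset.sum_congr rfl fun ℓ _ => by ring
  rw [Finset.sum_congr rfl hrow]
  have hsplit : ∀ j ∈ range N, ∑ ℓ ∈ range N,
      ((1 / ((j : ℝ) * x + (ℓ : ℝ) + 1) - 1 / (((j : ℝ) + 1) * x + (ℓ : ℝ) + 1))
        - (x / (((j : ℝ) + 1) * x + (ℓ : ℝ)) - x / (((j : ℝ) + 1) * x + (ℓ : ℝ) + 1)))
      = (∑ ℓ ∈ range N, (1 / ((j : ℝ) * x + (ℓ : ℝ) + 1) - 1 / (((j : ℝ) + 1) * x + (ℓ : ℝ) + 1)))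
        - (x / (((j : ℝ) + 1) * x) - x / (((j : ℝ) + 1) * x + (N : ℝ))) := by
    intro j _
    rw [Finset.sum_sub_distrib]
    congr 1
    have h := Finset.sum_range_sub' (fun ℓ : ℕ => x / (((j : ℝ) + 1) * x + (ℓ : ℝ))) N
    push_cast at h
    simp only [zero_mul, zero_add, add_zero] at h
    rw [← h]
    exact Finset.sum_congr rfl fun ℓ _ => by ring_nf
  rw [Finset.sum_congr rfl hsplit, Finset.sum_sub_distrib]
  have hA : ∑ j ∈ range N, ∑ ℓ ∈ range N,
      (1 / ((j : ℝ) * x + (ℓ : ℝ) + 1) - 1 / (((j : ℝ) + 1) * x + (ℓ : ℝ) + 1))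
      = ∑ ℓ ∈ range N, (1 / ((ℓ : ℝ) + 1) - 1 / ((N : ℝ) * x + (ℓ : ℝ) + 1)) := by
    rw [Finset.sum_comm]
    refine Finset.sum_congr rfl fun ℓ _ => ?_
    have h := Finset.sum_range_sub' (fun j : ℕ => 1 / ((j : ℝ) * x + (ℓ : ℝ) + 1)) N
    push_cast at h
    simp only [zero_mul, zero_add, add_zero] at h
    rw [← h]
  rw [hA, Finset.sum_sub_distrib, Finset.sum_sub_distrib]
  have hid : ∑ j ∈ range N, x / (((j : ℝ) + 1) * x)
      = ∑ ℓ ∈ range N, 1 / ((ℓ : ℝ) + 1) := by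
    refine Finset.sum_congr rfl fun j _ => ?_
    have h1 : ((j : ℝ) + 1) ≠ 0 := by positivity
    field_simp
  rw [hid]
  ring

/-! ### The limit of the boundary sums -/

lemma glog_ratio {a b c d : ℝ} (ha : 0 < a) (hc : 0 < c) (hb : 0 ≤ b) (hd : 0 ≤ d) :
    Tendsto (fun N : ℕ => Real.log (a * N + b) - Real.log (c * N + d)) atTop
      (𝓝 (Real.log (a / c))) := by
  have hz : Tendsto (fun n : ℕ => 1 / (n : ℝ)) atTop (𝓝 0) := tendsto_one_div_atTop_nhds_zero_nat
  have h1 : Tendsto (fun N : ℕ => (a + b * (1 / N)) / (c + d * (1 / N))) atTop (𝓝 (a / c)) := by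
    have hnum : Tendsto (fun N : ℕ => a + b * (1 / N)) atTop (𝓝 a) := by
      have := tendsto_const_nhds (x := a) (f := atTop (α := ℕ)) |>.add
        ((tendsto_const_nhds (x := b) (f := atTop (α := ℕ))).mul hz)
      simpa using this
    have hden : Tendsto (fun N : ℕ => c + d * (1 / N)) atTop (𝓝 c) := by
      have := tendsto_const_nhds (x := c) (f := atTop (α := ℕ)) |>.add
        ((tendsto_const_nhds (x := d) (f := atTop (α := ℕ))).mul hz)
      simpa using this
    exact hnum.div hden hc.ne'
  have h2 := h1.log (div_pos ha hc).ne'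
  apply h2.congr'
  filter_upwards [eventually_ge_atTop 1] with N hN
  have hN0 : (0:ℝ) < (N : ℝ) := by exact_mod_cast hN
  have hnum : (0:ℝ) < a * N + b := by positivity
  have hden : (0:ℝ) < c * N + d := by positivity
  have he : (a + b * (1 / N)) / (c + d * (1 / N)) = (a * N + b) / (c * N + d) := by
    rw [div_eq_div_iff (by positivity) (by positivity)]
    field_simp
  rw [he, Real.log_div hnum.ne' hden.ne']

lemma gtendsto_D (x : ℝ) (hx : 0 < x) :
    Tendsto (fun N : ℕ => ∑ j ∈ range N, x / (((j : ℝ) + 1) * x + (N : ℝ))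
        - ∑ ℓ ∈ range N, 1 / ((N : ℝ) * x + (ℓ : ℝ) + 1)) atTop (𝓝 (Real.log x)) := by
  have hT1u : ∀ N : ℕ, ∑ j ∈ range N, x / (((j : ℝ) + 1) * x + (N : ℝ))
      ≤ Real.log ((N : ℝ) * x + N) - Real.log ((0 : ℕ) * x + (N:ℝ)) := by
    intro N
    have htel := Finset.sum_range_sub (fun j : ℕ => Real.log ((j : ℝ) * x + N)) N
    rw [← htel]
    apply Finset.sum_le_sum
    intro j hj
    have hN1 : (1:ℝ) ≤ (N:ℝ) := by
      have := Finset.mem_range.mp hj; exact_mod_cast Nat.one_le_cast.mpr (by omega)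
    have ha : (0:ℝ) < (j : ℝ) * x + N := by positivity
    have h := glog_ge ha hx.le
    rw [show (j:ℝ) * x + (N:ℝ) + x = ((j:ℝ)+1) * x + N by ring] at h
    push_cast
    linarith [h]
  have hT1l : ∀ N : ℕ, Real.log ((N : ℝ) * x + x + N) - Real.log (((0:ℕ) : ℝ) * x + x + N)
      ≤ ∑ j ∈ range N, x / (((j : ℝ) + 1) * x + (N : ℝ)) := by
    intro N
    have htel := Finset.sum_range_sub (fun j : ℕ => Real.log ((j : ℝ) * x + x + N)) N
    rw [← htel]
    apply Finset.sum_le_sum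
    intro j hj
    have hN1 : (1:ℝ) ≤ (N:ℝ) := by
      have := Finset.mem_range.mp hj; exact_mod_cast Nat.one_le_cast.mpr (by omega)
    have ha : (0:ℝ) < (j : ℝ) * x + x + N := by positivity
    have h := glog_le ha hx.le
    rw [show (j:ℝ) * x + x + (N:ℝ) = ((j:ℝ)+1) * x + N by ring] at h
    push_cast
    rw [show ((j:ℝ)+1) * x + x + (N:ℝ) = ((j:ℝ)+1) * x + (N:ℝ) + x by ring,
      show (j:ℝ) * x + x + (N:ℝ) = ((j:ℝ)+1) * x + (N:ℝ) by ring]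
    exact h
  have hT2u : ∀ N : ℕ, ∑ ℓ ∈ range N, 1 / ((N : ℝ) * x + (ℓ : ℝ) + 1)
      ≤ Real.log ((N : ℝ) * x + N) - Real.log ((N : ℝ) * x + ((0:ℕ) : ℝ)) := by
    intro N
    have htel := Finset.sum_range_sub (fun ℓ : ℕ => Real.log ((N : ℝ) * x + ℓ)) N
    rw [← htel]
    apply Finset.sum_le_sum
    intro ℓ hℓ
    have hN1 : (1:ℝ) ≤ (N:ℝ) := by
      have := Finset.mem_range.mp hℓ; exact_mod_cast Nat.one_le_cast.mpr (by omega)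
    have ha : (0:ℝ) < (N : ℝ) * x + ℓ := by positivity
    have h := glog_ge ha zero_le_one
    push_cast
    rw [show (N:ℝ) * x + ((ℓ:ℝ)+1) = (N:ℝ) * x + (ℓ:ℝ) + 1 by ring]
    exact h
  have hT2l : ∀ N : ℕ, Real.log ((N : ℝ) * x + N + 1) - Real.log ((N : ℝ) * x + ((0:ℕ):ℝ) + 1)
      ≤ ∑ ℓ ∈ range N, 1 / ((N : ℝ) * x + (ℓ : ℝ) + 1) := by
    intro N
    have htel := Finset.sum_range_sub (fun ℓ : ℕ => Real.log ((N : ℝ) * x + ℓ + 1)) N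
    rw [← htel]
    apply Finset.sum_le_sum
    intro ℓ hℓ
    have ha : (0:ℝ) < (N : ℝ) * x + ℓ + 1 := by positivity
    have h := glog_le ha zero_le_one
    push_cast
    rw [show (N:ℝ) * x + ((ℓ:ℝ)+1) + 1 = (N:ℝ) * x + (ℓ:ℝ) + 1 + 1 by ring]
    exact h
  have l1 : Tendsto (fun N : ℕ => Real.log ((x+1) * N + x) - Real.log ((x+1) * N + 0)) atTop
      (𝓝 (Real.log ((x+1)/(x+1)))) := glog_ratio (by linarith) (by linarith) hx.le le_rfl
  have l2 : Tendsto (fun N : ℕ => Real.log (x * N + 0) - Real.log (1 * N + x)) atTop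
      (𝓝 (Real.log (x/1))) := glog_ratio hx one_pos le_rfl hx.le
  have l3 : Tendsto (fun N : ℕ => Real.log ((x+1) * N + 0) - Real.log (1 * N + 0)) atTop
      (𝓝 (Real.log ((x+1)/1))) := glog_ratio (by linarith) one_pos le_rfl le_rfl
  have l4 : Tendsto (fun N : ℕ => Real.log ((x+1) * N + 1) - Real.log (x * N + 1)) atTop
      (𝓝 (Real.log ((x+1)/x))) := glog_ratio (by linarith) hx zero_le_one zero_le_one
  have hL : Tendsto (fun N : ℕ =>
      (Real.log ((N : ℝ) * x + x + N) - Real.log (((0:ℕ) : ℝ) * x + x + N))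
        - (Real.log ((N : ℝ) * x + N) - Real.log ((N : ℝ) * x + ((0:ℕ) : ℝ)))) atTop
      (𝓝 (Real.log x)) := by
    have hsum := l1.add l2
    have hval : Real.log ((x+1)/(x+1)) + Real.log (x/1) = Real.log x := by
      rw [div_self (by linarith : x + 1 ≠ 0), Real.log_one, div_one, zero_add]
    rw [hval] at hsum
    apply hsum.congr
    intro N
    have e1 : (x+1) * (N:ℝ) + x = (N : ℝ) * x + x + N := by ring
    have e2 : (x+1) * (N:ℝ) + 0 = (N : ℝ) * x + N := by ring
    have e3 : x * (N:ℝ) + 0 = (N : ℝ) * x + ((0:ℕ) : ℝ) := by push_cast; ring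
    have e4 : 1 * (N:ℝ) + x = ((0:ℕ) : ℝ) * x + x + N := by push_cast; ring
    rw [e1, e2, e3, e4]
    ring
  have hU : Tendsto (fun N : ℕ =>
      (Real.log ((N : ℝ) * x + N) - Real.log (((0:ℕ) : ℝ) * x + N))
        - (Real.log ((N : ℝ) * x + N + 1) - Real.log ((N : ℝ) * x + ((0:ℕ) : ℝ) + 1))) atTop
      (𝓝 (Real.log x)) := by
    have hsum := l3.sub l4
    have hval : Real.log ((x+1)/1) - Real.log ((x+1)/x) = Real.log x := by
      rw [div_one, Real.log_div (by linarith : x + 1 ≠ 0) hx.ne']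
      ring
    rw [hval] at hsum
    apply hsum.congr
    intro N
    have e1 : (x+1) * (N:ℝ) + 0 = (N : ℝ) * x + N := by ring
    have e2 : 1 * (N:ℝ) + 0 = ((0:ℕ) : ℝ) * x + N := by push_cast; ring
    have e3 : (x+1) * (N:ℝ) + 1 = (N : ℝ) * x + N + 1 := by ring
    have e4 : x * (N:ℝ) + 1 = (N : ℝ) * x + ((0:ℕ) : ℝ) + 1 := by push_cast; ring
    rw [e1, e2, e3, e4]
  refine tendsto_of_tendsto_of_tendsto_of_le_of_le hL hU ?_ ?_
  · intro N
    have h1 := hT1l N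
    have h2 := hT2u N
    simp only
    linarith
  · intro N
    have h1 := hT1u N
    have h2 := hT2l N
    simp only
    linarith

/-! ### The key double-sum evaluation -/

lemma gkey (x : ℝ) (hx : 0 < x) {F : ℕ × ℕ → ℝ} (hF : Summable F)
    (hFe : ∀ p : ℕ × ℕ, F p =
      (x - 1) / (((p.1 : ℝ) + 1) * x + (p.2 : ℝ) + 1)
        - x / (((p.1 : ℝ) + 1) * x + (p.2 : ℝ))
        + 1 / ((p.1 : ℝ) * x + (p.2 : ℝ) + 1)) :
    ∑' p, F p = Real.log x := by
  refine tendsto_nhds_unique (gtendsto_sq_sum hF) ((gtendsto_D x hx).congr fun N => ?_)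
  rw [← gsq_sum x hx N]
  exact (Finset.sum_congr rfl fun p _ => (hFe p).symm)

end GuinandAux

theorem guinand_trigamma (x : ℝ) (hx : 0 < x) :
    x * (∑' j : ℕ, (psiDeriv 1 (1 + ((j : ℝ) + 1) * x) - 1 / (((j : ℝ) + 1) * x)))
        - (1 / 2) * Real.log x
      = (1 / x) * (∑' j : ℕ, (psiDeriv 1 (1 + ((j : ℝ) + 1) / x) - x / ((j : ℝ) + 1)))
        - (1 / 2) * Real.log (1 / x) := by
  set g₁ : ℕ × ℕ → ℝ := fun p =>
    x / ((((p.1 : ℝ) + 1) * x + (p.2 : ℝ) + 1) ^ 2 * (((p.1 : ℝ) + 1) * x + (p.2 : ℝ)))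
    with hg₁def
  set g₂ : ℕ × ℕ → ℝ := fun p =>
    x ^ 2 / ((((p.1 : ℝ) + 1) * x + (p.2 : ℝ) + 1) ^ 2 * ((p.1 : ℝ) * x + (p.2 : ℝ) + 1))
    with hg₂def
  -- summability of g₁
  have hg₁ : Summable g₁ := by
    refine gsummable_of_le_cube (C := x) hx (fun p => by positivity) ?_
    intro j ℓ
    set a : ℝ := ((j : ℝ) + 1) * x with ha_def
    set b : ℝ := (ℓ : ℝ) + 1 with hb_def
    have ha : 0 < a := by positivity
    have hb : 0 < b := by positivity
    have hl : (0:ℝ) ≤ (ℓ : ℝ) := Nat.cast_nonneg ℓ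
    have key : a * b * (a + b) ≤ (a + (ℓ:ℝ) + 1) ^ 2 * (a + (ℓ:ℝ)) := by
      nlinarith [mul_pos ha hb, sq_nonneg (a + b), mul_nonneg ha.le hl,
        mul_nonneg (mul_nonneg ha.le hl) hl, mul_nonneg (mul_nonneg ha.le ha.le) hl]
    have := div_le_div_of_nonneg_left hx.le (by positivity) key
    simpa [hg₁def, ha_def, hb_def, add_assoc] using this
  -- summability of g₂
  have hg₂ : Summable g₂ := by
    refine gsummable_of_le_cube (C := x ^ 2) hx (fun p => by positivity) ?_
    intro j ℓ
    set a : ℝ := ((j : ℝ) + 1) * x with ha_def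
    set b : ℝ := (ℓ : ℝ) + 1 with hb_def
    have ha : 0 < a := by positivity
    have hb : 0 < b := by positivity
    have hj : (0:ℝ) ≤ (j : ℝ) := Nat.cast_nonneg j
    have key : a * b * (a + b) ≤ (a + (ℓ:ℝ) + 1) ^ 2 * ((j:ℝ) * x + (ℓ:ℝ) + 1) := by
      have hxa : x ≤ a := by
        rw [ha_def]; nlinarith
      have e2 : (j:ℝ) * x + (ℓ:ℝ) + 1 = a + b - x := by rw [ha_def, hb_def]; ring
      have e1 : a + (ℓ:ℝ) + 1 = a + b := by rw [hb_def]; ring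
      rw [e1, e2]
      have h1 : a * b ≤ (a + b) * (a + b - x) :=
        mul_le_mul (by linarith) (by linarith) hb.le (by positivity)
      calc a * b * (a + b) ≤ (a + b) * (a + b - x) * (a + b) :=
            mul_le_mul_of_nonneg_right h1 (by positivity)
        _ = (a + b) ^ 2 * (a + b - x) := by ring
    have := div_le_div_of_nonneg_left (by positivity : (0:ℝ) ≤ x ^ 2) (by positivity) key
    simpa [hg₂def, ha_def, hb_def, add_assoc] using this
  -- the left-hand series
  have hS1 : x * (∑' j : ℕ, (psiDeriv 1 (1 + ((j : ℝ) + 1) * x) - 1 / (((j : ℝ) + 1) * x)))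
      = -∑' p : ℕ × ℕ, g₁ p := by
    rw [← tsum_mul_left]
    have hstep : ∀ j : ℕ, x * (psiDeriv 1 (1 + ((j : ℝ) + 1) * x) - 1 / (((j : ℝ) + 1) * x))
        = -∑' ℓ : ℕ, g₁ (j, ℓ) := by
      intro j
      have hy : 0 < ((j : ℝ) + 1) * x := by positivity
      rw [gpsi_eq hy, mul_neg, ← tsum_mul_left]
      congr 1
      refine tsum_congr fun ℓ => ?_
      have hd1 : (0:ℝ) < (ℓ : ℝ) + 1 + ((j : ℝ) + 1) * x := by positivity
      have hd2 : (0:ℝ) < (ℓ : ℝ) + ((j : ℝ) + 1) * x := by positivity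
      simp only [hg₁def]
      rw [mul_one_div]
      congr 1
      ring
    rw [tsum_congr hstep, tsum_neg]
    congr 1
    exact (Summable.tsum_prod hg₁).symm
  -- the right-hand series
  have hS2 : (1 / x) * (∑' j : ℕ, (psiDeriv 1 (1 + ((j : ℝ) + 1) / x) - x / ((j : ℝ) + 1)))
      = -∑' p : ℕ × ℕ, g₂ p := by
    rw [← tsum_mul_left]
    have hstep : ∀ j : ℕ, (1 / x) * (psiDeriv 1 (1 + ((j : ℝ) + 1) / x) - x / ((j : ℝ) + 1))
        = -∑' ℓ : ℕ, g₂ (ℓ, j) := by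
      intro j
      have hy : 0 < ((j : ℝ) + 1) / x := by positivity
      rw [show x / ((j : ℝ) + 1) = 1 / (((j : ℝ) + 1) / x) by rw [one_div_div]]
      rw [gpsi_eq hy, mul_neg, ← tsum_mul_left]
      congr 1
      refine tsum_congr fun ℓ => ?_
      have hd1 : (0:ℝ) < (ℓ : ℝ) + 1 + ((j : ℝ) + 1) / x := by positivity
      have hd2 : (0:ℝ) < (ℓ : ℝ) + ((j : ℝ) + 1) / x := by positivity
      simp only [hg₂def]
      have hx' : x ≠ 0 := hx.ne'
      field_simp
      ring
    rw [tsum_congr hstep, tsum_neg]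
    congr 1
    have h1 : ∑' (j : ℕ) (ℓ : ℕ), g₂ (ℓ, j) = ∑' p : ℕ × ℕ, g₂ p.swap :=
      (Summable.tsum_prod hg₂.prod_symm).symm
    rw [h1]
    exact (Equiv.prodComm ℕ ℕ).tsum_eq g₂
  -- the difference of the two double sums
  have hdiff : ∑' p : ℕ × ℕ, g₂ p - ∑' p : ℕ × ℕ, g₁ p = Real.log x := by
    rw [← Summable.tsum_sub hg₂ hg₁]
    refine gkey x hx (hg₂.sub hg₁) ?_
    rintro ⟨j, ℓ⟩
    simp only [hg₁def, hg₂def]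
    have hd0 : (0:ℝ) < ((j : ℝ) + 1) * x + (ℓ : ℝ) + 1 := by positivity
    have hd1 : (0:ℝ) < ((j : ℝ) + 1) * x + (ℓ : ℝ) := by positivity
    have hd2 : (0:ℝ) < (j : ℝ) * x + (ℓ : ℝ) + 1 := by positivity
    field_simp
    ring
  have hlog : Real.log (1 / x) = -Real.log x := by
    rw [one_div, Real.log_inv]
  rw [hS1, hS2, hlog]
  linarith
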